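/- Let k ≥ 1 and let G = (ℤ/4ℤ)^{2k}. Let C ⊆ G consist of the 2k standard basis vectors e₁,…,e_{2k} together with the all-ones vector (1,1,…,1), and let A be the skew adjacency matrix of the oriented Cayley graph X(G,C). Then every entry of exp(−(π/4)·A) has absolute value 1/2^{2k} = 1/√|G|; that is, X(G,C) admits uniform mixing at time π/4. -/

import Mathlib

open NormedSpace Real Nat Finset

namespace Stmt17Aux

variable {k : ℕ}

abbrev Gk (k : ℕ) := Fin (2*k) → ZMod 4

/-- shift matrix -/
def Pm (c : Gk k) : Matrix (Gk k) (Gk k) ℝ :=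
  Matrix.of fun g h => if h - g = c then 1 else 0

lemma Pm_zero : Pm (0 : Gk k) = 1 := by
  ext g h
  simp [Pm, Matrix.one_apply, sub_eq_zero, eq_comm]

lemma Pm_mul_apply (c : Gk k) (B : Matrix (Gk k) (Gk k) ℝ) (g h : Gk k) :
    (Pm c * B) g h = B (g + c) h := by
  rw [Matrix.mul_apply]
  rw [Finset.sum_eq_single (g + c)]
  · simp [Pm]
  · intro x _ hx
    have : ¬ (x - g = c) := fun hh => hx (by rw [← hh]; abel)
    simp [Pm, this]
  · simp

lemma Pm_mul (c d : Gk k) : Pm c * Pm d = Pm (c + d) := by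
  ext g h
  rw [Pm_mul_apply]
  have hiff : (h - (g + c) = d) ↔ (h - g = c + d) := by
    constructor <;> intro h' <;> linear_combination h'
  simp [Pm, hiff]

lemma Pm_commute (c d : Gk k) : Commute (Pm c) (Pm d) := by
  unfold Commute SemiconjBy
  rw [Pm_mul, Pm_mul, add_comm]

/-- the skew matrix of a single connection element -/
def Mm (c : Gk k) : Matrix (Gk k) (Gk k) ℝ := Pm c - Pm (-c)

lemma Mm_commute (c d : Gk k) : Commute (Mm c) (Mm d) :=
  ((Pm_commute c d).sub_right (Pm_commute c (-d))).sub_left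
    ((Pm_commute (-c) d).sub_right (Pm_commute (-c) (-d)))

lemma hfour (c : Gk k) : c + c + c + c = 0 := by
  funext i
  show c i + c i + c i + c i = 0
  have h4 : (4 : ZMod 4) = 0 := by decide
  linear_combination (c i) * h4

lemma hneg (c : Gk k) : -c = c + c + c := by
  have h := hfour c
  linear_combination -h

lemma Mm_sq (c : Gk k) : Mm c * Mm c = Pm (c+c) + Pm (c+c) - 1 - 1 := by
  unfold Mm
  have h1 : -c + -c = c + c := by
    have h := hfour c
    linear_combination -h
  rw [sub_mul, mul_sub, mul_sub, Pm_mul, Pm_mul, Pm_mul, Pm_mul,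
    add_neg_cancel, neg_add_cancel, h1, Pm_zero]
  abel

lemma Mm_cube (c : Gk k) : Mm c ^ 3 = (-4 : ℝ) • Mm c := by
  have h2 : Mm c ^ 3 = Mm c * Mm c * Mm c := by rw [pow_succ, pow_two]
  rw [h2, Mm_sq]
  unfold Mm
  have e2 : c + c + -c = c := by abel
  rw [sub_mul, sub_mul, add_mul, one_mul, mul_sub, Pm_mul, Pm_mul, e2]
  rw [← hneg]
  module

lemma exp_cube {n : Type*} [Fintype n] [DecidableEq n] (X : Matrix n n ℝ)
    (hX : X ^ 3 = (-(π/2)^2) • X) :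
    NormedSpace.exp X = 1 + (2/π) • X + (4/π^2) • X ^ 2 := by
  letI : SeminormedRing (Matrix n n ℝ) := Matrix.linftyOpSemiNormedRing
  letI : NormedRing (Matrix n n ℝ) := Matrix.linftyOpNormedRing
  letI : NormedAlgebra ℝ (Matrix n n ℝ) := Matrix.linftyOpNormedAlgebra
  have hpi := Real.pi_pos
  set r : ℝ := -(π/2)^2 with hr
  have hX3 : X ^ 3 = r • X := hX
  have hrm : ∀ m : ℕ, r ^ m = (-1:ℝ)^m * (π/2)^(2*m) := by
    intro m
    rw [hr, ← neg_one_mul, mul_pow, ← pow_mul]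
  have hx4 : X ^ 2 * X ^ 2 = r • X ^ 2 := by
    calc X ^ 2 * X ^ 2 = X ^ (2+2) := (pow_add X 2 2).symm
    _ = X ^ 3 * X := by rw [show (2+2 : ℕ) = 3 + 1 from rfl, pow_succ]
    _ = r • (X * X) := by rw [hX3, Algebra.smul_mul_assoc]
    _ = r • X ^ 2 := by rw [← pow_two]
  have hodd : ∀ m : ℕ, X ^ (2*m+1) = r^m • X := by
    intro m
    induction m with
    | zero => simp
    | succ m ih =>
      have h1 : 2*(m+1)+1 = (2*m+1) + 2 := by ring
      rw [h1, pow_add, ih, Algebra.smul_mul_assoc]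
      have h2 : X * X ^ 2 = X ^ 3 := (pow_succ' X 2).symm
      rw [h2, hX3, smul_smul, pow_succ r m]
  have heven : ∀ m : ℕ, X ^ (2*(m+1)) = r^m • X ^ 2 := by
    intro m
    induction m with
    | zero => simp
    | succ m ih =>
      have h1 : 2*(m+1+1) = (2*(m+1)) + 2 := by ring
      rw [h1, pow_add, ih, Algebra.smul_mul_assoc, hx4, smul_smul, pow_succ r m]
  -- scalar series for the odd part
  have hs : HasSum (fun m : ℕ => (((2*m+1)! : ℝ)⁻¹ * r^m)) (2/π) := by
    have h := (Real.hasSum_sin (π/2)).div_const (π/2)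
    rw [Real.sin_pi_div_two] at h
    have h1 : (1 : ℝ) / (π/2) = 2/π := by field_simp
    rw [h1] at h
    convert h using 2 with m
    · rfl
    rw [hrm, pow_succ]
    have hf : ((2*m+1)! : ℝ) ≠ 0 := Nat.cast_ne_zero.mpr (Nat.factorial_ne_zero _)
    field_simp
  -- scalar series for the even part
  have hc : HasSum (fun m : ℕ => (((2*(m+1))! : ℝ)⁻¹ * r^m)) (4/π^2) := by
    have h0 := Real.hasSum_cos (π/2)
    rw [Real.cos_pi_div_two] at h0
    set gc : ℕ → ℝ := fun n => (-1:ℝ)^n * (π/2)^(2*n) / ((2*n)! : ℝ) with hgc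
    have h1 : HasSum (fun m : ℕ => gc (m+1)) (-1) := by
      refine (hasSum_nat_add_iff (f := gc) 1).mpr ?_
      simp only [Finset.range_one, Finset.sum_singleton]
      have : gc 0 = 1 := by simp [hgc]
      rw [this]
      norm_num
      exact h0
    have h2 : HasSum (fun m : ℕ => (-(π/2)^2) * ((((2*(m+1))! : ℝ))⁻¹ * r^m)) (-1) := by
      convert h1 using 2 with m
      rw [hgc]
      simp only []
      rw [hrm]
      have h3 : 2*(m+1) = (2*m+1)+1 := by ring
      have hf : ((2*(m+1))! : ℝ) ≠ 0 := Nat.cast_ne_zero.mpr (Nat.factorial_ne_zero _)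
      rw [h3, pow_succ ((-1:ℝ)) m, pow_succ (π/2) (2*m+1), pow_succ (π/2) (2*m)]
      field_simp
    have h3 := h2.div_const (-(π/2)^2)
    have hne : (-(π/2)^2 : ℝ) ≠ 0 := neg_ne_zero.mpr (by positivity)
    have h4 : (-1 : ℝ) / (-(π/2)^2) = 4/π^2 := by
      rw [div_eq_iff hne]
      field_simp
      ring
    rw [h4] at h3
    convert h3 using 2 with m
    · rfl
    field_simp
  -- assemble
  set F : ℕ → Matrix n n ℝ := fun m => ((m ! : ℝ)⁻¹) • X ^ m with hF
  have hodd' : HasSum (fun m : ℕ => F (2*m+1)) ((2/π) • X) := by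
    have h := hs.smul_const X
    convert h using 2 with m
    rw [hF]
    simp only []
    rw [hodd m, smul_smul]
  have heven' : HasSum (fun m : ℕ => F (2*m)) (1 + (4/π^2) • X ^ 2) := by
    have h1 : HasSum (fun m : ℕ => F (2*(m+1))) ((4/π^2) • X ^ 2) := by
      have h := hc.smul_const (X ^ 2)
      convert h using 2 with m
      rw [hF]
      simp only []
      rw [heven m, smul_smul]
    have h2 : HasSum (fun m : ℕ => (fun j => F (2*j)) (m+1)) ((4/π^2) • X ^ 2) := by
      convert h1 using 2 with m
    have h3 := (hasSum_nat_add_iff (f := fun j => F (2*j)) 1).mp h2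
    simp only [Finset.range_one, Finset.sum_singleton] at h3
    have h4 : F (2*0) = 1 := by simp [hF]
    rw [h4] at h3
    convert h3 using 1
    · rfl
    abel
  have htot : HasSum F (1 + (2/π) • X + (4/π^2) • X ^ 2) := by
    have := heven'.even_add_odd hodd'
    convert this using 1
    abel
  rw [exp_eq_tsum ℝ]
  exact htot.tsum_eq

lemma expM (c : Gk k) :
    NormedSpace.exp ((-(π/4)) • Mm c) =
      (1/2 : ℝ) • (1 - Pm c + Pm (c+c) + Pm (c+c+c)) := by
  have hpi := Real.pi_pos
  have hX : ((-(π/4)) • Mm c) ^ 3 = (-(π/2)^2) • ((-(π/4)) • Mm c) := by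
    rw [smul_pow, Mm_cube, smul_smul, smul_smul]
    congr 1
    ring
  rw [exp_cube _ hX]
  rw [smul_pow, smul_smul, smul_smul]
  have hco1 : (2/π) * (-(π/4)) = -(1/2) := by field_simp; ring
  have hco2 : (4/π^2) * (-(π/4))^2 = 1/4 := by field_simp
  rw [hco1, hco2]
  rw [pow_two, Mm_sq]
  unfold Mm
  rw [hneg]
  module

noncomputable def q (v : ZMod 4) : ℝ := if v = 1 then -(1/2) else 1/2

noncomputable def QS (S : Finset (Fin (2*k))) : Matrix (Gk k) (Gk k) ℝ :=
  Matrix.of fun g h =>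
    (∏ i ∈ S, q ((h - g) i)) * ∏ i ∈ Sᶜ, (if (h - g) i = 0 then (1:ℝ) else 0)

lemma QS_empty : QS (∅ : Finset (Fin (2*k))) = 1 := by
  ext g h
  unfold QS
  simp only [Matrix.of_apply, Finset.prod_empty, one_mul, Finset.compl_empty]
  rw [Finset.prod_boole, Matrix.one_apply]
  congr 1
  simp only [eq_iff_iff]
  constructor
  · intro hall
    have : h - g = 0 := by funext i; exact hall i (Finset.mem_univ i)
    have := sub_eq_zero.mp this
    exact this.symm
  · intro hgh i _
    rw [hgh]
    simp

lemma Ec_mul (c : Gk k) (B : Matrix (Gk k) (Gk k) ℝ) (g h : Gk k) :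
    (((1/2:ℝ) • (1 - Pm c + Pm (c+c) + Pm (c+c+c))) * B) g h
      = (1/2) * (B g h - B (g + c) h + B (g + (c+c)) h + B (g + (c+c+c)) h) := by
  rw [Matrix.smul_mul, Matrix.smul_apply, Matrix.add_mul, Matrix.add_mul,
    Matrix.sub_mul, Matrix.one_mul]
  simp only [Matrix.add_apply, Matrix.sub_apply, Pm_mul_apply]
  rw [smul_eq_mul]

lemma QS_apply_eq (S : Finset (Fin (2*k))) (j : Fin (2*k)) (hj : j ∉ S) (g' h : Gk k) :
    QS S g' h = (if (h - g') j = 0 then (1:ℝ) else 0) *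
      ((∏ i ∈ S, q ((h - g') i)) *
        ∏ i ∈ Sᶜ.erase j, (if (h - g') i = 0 then (1:ℝ) else 0)) := by
  unfold QS
  simp only [Matrix.of_apply]
  rw [← Finset.mul_prod_erase _ _ (Finset.mem_compl.mpr hj)]
  ring

lemma sub_add_apply (g h c' : Gk k) (i : Fin (2*k)) :
    (h - (g + c')) i = (h - g) i - c' i := by
  show h i - (g i + c' i) = (h i - g i) - c' i
  ring

lemma QS_insert (j : Fin (2*k)) (S : Finset (Fin (2*k))) (hj : j ∉ S) :
    ((1/2:ℝ) • (1 - Pm (Pi.single j 1) + Pm (Pi.single j 1 + Pi.single j 1)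
      + Pm (Pi.single j 1 + Pi.single j 1 + Pi.single j 1))) * QS S
      = QS (insert j S) := by
  ext g h
  set e : Gk k := Pi.single j 1 with he
  rw [Ec_mul]
  rw [QS_apply_eq S j hj g h, QS_apply_eq S j hj (g + e) h,
    QS_apply_eq S j hj (g + (e + e)) h, QS_apply_eq S j hj (g + (e + e + e)) h]
  -- the values at j
  have hej : e j = 1 := Pi.single_eq_same j 1
  have hez : ∀ i, i ≠ j → e i = 0 := fun i hij => Pi.single_eq_of_ne hij 1
  -- products over S and over Sᶜ.erase j do not change
  have hS : ∀ c' : Gk k, (∀ i, i ≠ j → c' i = 0) →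
      ∏ i ∈ S, q ((h - (g + c')) i) = ∏ i ∈ S, q ((h - g) i) := by
    intro c' hc'
    refine Finset.prod_congr rfl fun i hi => ?_
    have hij : i ≠ j := fun hh => hj (hh ▸ hi)
    rw [sub_add_apply, hc' i hij, sub_zero]
  have hE : ∀ c' : Gk k, (∀ i, i ≠ j → c' i = 0) →
      ∏ i ∈ Sᶜ.erase j, (if (h - (g + c')) i = 0 then (1:ℝ) else 0)
        = ∏ i ∈ Sᶜ.erase j, (if (h - g) i = 0 then (1:ℝ) else 0) := by
    intro c' hc'
    refine Finset.prod_congr rfl fun i hi => ?_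
    have hij : i ≠ j := Finset.ne_of_mem_erase hi
    rw [sub_add_apply, hc' i hij, sub_zero]
  have hz1 : ∀ i, i ≠ j → (e + e) i = 0 := by
    intro i hij; show e i + e i = 0; rw [hez i hij]; ring
  have hz2 : ∀ i, i ≠ j → (e + e + e) i = 0 := by
    intro i hij; show e i + e i + e i = 0; rw [hez i hij]; ring
  rw [hS e hez, hS _ hz1, hS _ hz2, hE e hez, hE _ hz1, hE _ hz2]
  -- values at j
  have hv1 : (h - (g + e)) j = (h - g) j - 1 := by rw [sub_add_apply, hej]
  have hv2 : (h - (g + (e + e))) j = (h - g) j - 2 := by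
    rw [sub_add_apply]; show _ = (h-g) j - (1 + 1); rw [show (e+e) j = e j + e j from rfl, hej]
  have hv3 : (h - (g + (e + e + e))) j = (h - g) j - 3 := by
    rw [sub_add_apply]; show _ = (h-g) j - (1 + 1 + 1)
    rw [show (e+e+e) j = e j + e j + e j from rfl, hej]
  rw [hv1, hv2, hv3]
  -- RHS
  unfold QS
  simp only [Matrix.of_apply]
  rw [Finset.prod_insert hj, Finset.compl_insert]
  -- case on the value of (h - g) j
  have hv4 : ∀ v : ZMod 4, v = 0 ∨ v = 1 ∨ v = 2 ∨ v = 3 := by decide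
  have c10 : ((1:ZMod 4) = 0) = False := eq_false (by decide)
  have c20 : ((2:ZMod 4) = 0) = False := eq_false (by decide)
  have c30 : ((3:ZMod 4) = 0) = False := eq_false (by decide)
  have c00 : ((0:ZMod 4) = 0) = True := eq_true (by decide)
  have c01 : ((0:ZMod 4) = 1) = False := eq_false (by decide)
  have c21 : ((2:ZMod 4) = 1) = False := eq_false (by decide)
  have c31 : ((3:ZMod 4) = 1) = False := eq_false (by decide)
  have c11 : ((1:ZMod 4) = 1) = True := eq_true (by decide)
  have z01 : (0:ZMod 4) - 1 = 3 := by decide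
  have z02 : (0:ZMod 4) - 2 = 2 := by decide
  have z03 : (0:ZMod 4) - 3 = 1 := by decide
  have z11 : (1:ZMod 4) - 1 = 0 := by decide
  have z12 : (1:ZMod 4) - 2 = 3 := by decide
  have z13 : (1:ZMod 4) - 3 = 2 := by decide
  have z21 : (2:ZMod 4) - 1 = 1 := by decide
  have z22 : (2:ZMod 4) - 2 = 0 := by decide
  have z23 : (2:ZMod 4) - 3 = 3 := by decide
  have z31 : (3:ZMod 4) - 1 = 2 := by decide
  have z32 : (3:ZMod 4) - 2 = 1 := by decide
  have z33 : (3:ZMod 4) - 3 = 0 := by decide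
  rcases hv4 ((h - g) j) with hv | hv | hv | hv <;>
    rw [hv] <;>
    simp only [q, z01, z02, z03, z11, z12, z13, z21, z22, z23, z31, z32, z33,
      c10, c20, c30, c00, c01, c21, c31, c11, if_true, if_false] <;>
    ring

lemma exp_sum_eq (S : Finset (Fin (2*k))) :
    NormedSpace.exp ((-(π/4)) • ∑ i ∈ S, Mm (Pi.single i 1)) = QS S := by
  induction S using Finset.induction_on with
  | empty => rw [Finset.sum_empty, smul_zero, NormedSpace.exp_zero, QS_empty]
  | @insert j S hj ih =>
    rw [Finset.sum_insert hj, smul_add]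
    rw [Matrix.exp_add_of_commute]
    · rw [expM, ih, QS_insert j S hj]
    · exact ((Commute.sum_right S _ _ fun i _ =>
        Mm_commute (Pi.single j 1) (Pi.single i 1)).smul_left _).smul_right _

lemma prod_q_eq (d : Gk k) (r : ZMod 4) :
    ∏ i, q (d i - r) =
      (1/2:ℝ)^(2*k) * (-1:ℝ)^((Finset.univ.filter fun i => d i = r + 1).card) := by
  have h1 : ∀ i : Fin (2*k), q (d i - r)
      = (1/2:ℝ) * (if d i = r + 1 then (-1:ℝ) else 1) := by
    intro i
    by_cases hdi : d i = r + 1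
    · have hx : d i - r = 1 := by rw [hdi]; ring
      simp [q, hx, hdi]
    · have hx : d i - r ≠ 1 := fun hc => hdi (by linear_combination hc)
      simp [q, hx, hdi]
  rw [Finset.prod_congr rfl fun i _ => h1 i]
  rw [Finset.prod_mul_distrib, Finset.prod_const, Finset.prod_ite,
    Finset.prod_const, Finset.prod_const_one, mul_one]
  simp [Finset.card_univ]

lemma abs_comb (n0 n1 n2 n3 : ℕ) (hpar : Even (n0 + n1 + n2 + n3)) :
    |(-1:ℝ)^n1 - (-1:ℝ)^n2 + (-1:ℝ)^n3 + (-1:ℝ)^n0| = 2 := by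
  obtain ⟨p, hp⟩ := hpar
  rcases Nat.even_or_odd n0 with h0 | h0 <;>
  rcases Nat.even_or_odd n1 with h1 | h1 <;>
  rcases Nat.even_or_odd n2 with h2 | h2 <;>
  rcases Nat.even_or_odd n3 with h3 | h3 <;>
  simp only [h0.neg_one_pow, h1.neg_one_pow, h2.neg_one_pow, h3.neg_one_pow] <;>
  obtain ⟨a0, ha0⟩ := h0 <;> obtain ⟨a1, ha1⟩ := h1 <;>
  obtain ⟨a2, ha2⟩ := h2 <;> obtain ⟨a3, ha3⟩ := h3 <;>
  first
    | (exfalso; omega)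
    | norm_num

lemma fiber_count (d : Gk k) :
    ((Finset.univ.filter fun i => d i = 0).card
      + (Finset.univ.filter fun i => d i = 1).card
      + (Finset.univ.filter fun i => d i = 2).card
      + (Finset.univ.filter fun i => d i = 3).card) = 2 * k := by
  have h := Finset.card_eq_sum_card_fiberwise
    (f := d) (s := Finset.univ) (t := (Finset.univ : Finset (ZMod 4)))
    (fun x _ => Finset.mem_univ _)
  have huniv : (Finset.univ : Finset (ZMod 4)) = {0, 1, 2, 3} := by decide
  rw [huniv] at h
  rw [Finset.sum_insert (by decide), Finset.sum_insert (by decide),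
    Finset.sum_insert (by decide), Finset.sum_singleton] at h
  have hcard : (Finset.univ : Finset (Fin (2*k))).card = 2 * k := by
    simp [Finset.card_univ]
  rw [hcard] at h
  omega

lemma Mm_apply (c : Gk k) (g h : Gk k) :
    Mm c g h = (if h - g = c then (1:ℝ) else 0) - (if h - g = -c then 1 else 0) := by
  simp [Mm, Pm, Matrix.sub_apply]

section Aeq

variable (hk : 1 ≤ k)
include hk

lemma hne_ee_negee (i j : Fin (2*k)) :
    (Pi.single i (1:ZMod 4) : Gk k) ≠ -(Pi.single j (1:ZMod 4) : Gk k) := by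
  intro hcon
  have hc := congrFun hcon i
  rw [Pi.single_eq_same] at hc
  by_cases hij : j = i
  · subst hij
    rw [Pi.neg_apply, Pi.single_eq_same] at hc
    exact absurd hc (by decide)
  · rw [Pi.neg_apply, Pi.single_eq_of_ne (Ne.symm hij)] at hc
    exact absurd hc (by decide)

lemma hne_ee_negone (i : Fin (2*k)) :
    Pi.single i (1:ZMod 4) ≠ -(fun _ => (1:ZMod 4)) := by
  intro hcon
  have hc := congrFun hcon i
  rw [Pi.single_eq_same, Pi.neg_apply] at hc
  exact absurd hc (by decide)

lemma hne_one_negee (i : Fin (2*k)) :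
    (fun _ => (1:ZMod 4)) ≠ -Pi.single i (1:ZMod 4) := by
  intro hcon
  have hc := congrFun hcon i
  rw [Pi.neg_apply, Pi.single_eq_same] at hc
  exact absurd hc (by decide)

lemma hne_one_negone :
    (fun _ => (1:ZMod 4)) ≠ -(fun _ => (1:ZMod 4) : Gk k) := by
  intro hcon
  have hc := congrFun hcon ⟨0, by omega⟩
  rw [Pi.neg_apply] at hc
  exact absurd hc (by decide)

lemma hne_ee_one (i : Fin (2*k)) :
    Pi.single i (1:ZMod 4) ≠ (fun _ => (1:ZMod 4)) := by
  intro hcon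
  have h0 : (0:ℕ) < 2*k := by omega
  have h1 : (1:ℕ) < 2*k := by omega
  by_cases hi : i = (⟨0, h0⟩ : Fin (2*k))
  · have hc := congrFun hcon ⟨1, h1⟩
    rw [hi, Pi.single_eq_of_ne (by intro hcon2; exact absurd (congrArg Fin.val hcon2) (by norm_num))] at hc
    exact absurd hc (by decide)
  · have hc := congrFun hcon ⟨0, h0⟩
    rw [Pi.single_eq_of_ne (fun hcon2 => hi hcon2.symm)] at hc
    exact absurd hc (by decide)

lemma hee_inj (i j : Fin (2*k))
    (hcon : (Pi.single i (1:ZMod 4) : Gk k) = (Pi.single j (1:ZMod 4) : Gk k)) : i = j := by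
  by_contra hij
  have hc := congrFun hcon i
  rw [Pi.single_eq_same, Pi.single_eq_of_ne hij] at hc
  exact absurd hc (by decide)

lemma A_eq (C : Set (Gk k))
    (hC : C = {x | (∃ i, x = Pi.single i 1) ∨ x = fun _ => 1})
    (A : Matrix (Gk k) (Gk k) ℝ)
    (hA : ∀ g h, (h - g ∈ C → A g h = 1) ∧ (g - h ∈ C → A g h = -1) ∧
      (h - g ∉ C → g - h ∉ C → A g h = 0)) :
    A = Mm (fun _ => 1) + ∑ i, Mm (Pi.single i 1) := by
  subst hC
  ext g h
  simp only [Matrix.add_apply, Matrix.sum_apply, Mm_apply]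
  have hgh : g - h = -(h - g) := (neg_sub h g).symm
  by_cases hd : h - g ∈ {x : Gk k | (∃ i, x = Pi.single i 1) ∨ x = fun _ => 1}
  · rw [(hA g h).1 hd]
    rw [Set.mem_setOf_eq] at hd
    rcases hd with ⟨i0, hi0⟩ | h1
    · rw [hi0]
      rw [if_neg (hne_ee_one hk i0), if_neg (hne_ee_negone hk i0)]
      rw [Finset.sum_eq_single i0]
      · rw [if_pos rfl, if_neg (hne_ee_negee hk i0 i0)]
        norm_num
      · intro b _ hb
        rw [if_neg (fun hcon => hb (hee_inj hk i0 b hcon).symm), if_neg (hne_ee_negee hk i0 b)]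
        norm_num
      · intro habs; exact absurd (Finset.mem_univ i0) habs
    · rw [h1]
      rw [if_pos rfl, if_neg (hne_one_negone hk)]
      rw [Finset.sum_eq_zero]
      · norm_num
      · intro b _
        rw [if_neg (fun hcon => hne_ee_one hk b hcon.symm), if_neg (hne_one_negee hk b)]
        norm_num
  · by_cases hd2 : g - h ∈ {x : Gk k | (∃ i, x = Pi.single i 1) ∨ x = fun _ => 1}
    · rw [(hA g h).2.1 hd2]
      rw [Set.mem_setOf_eq, hgh] at hd2
      rcases hd2 with ⟨i0, hi0⟩ | h1
      · -- h - g = -(Pi.single i0 1)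
        have hd0 : h - g = -Pi.single i0 1 := by
          rw [← neg_neg (h - g), hi0]
        rw [hd0]
        rw [if_neg (fun hcon => hne_one_negee hk i0 hcon.symm),
          if_neg (fun hcon => hne_ee_one hk i0 (neg_inj.mp hcon))]
        rw [Finset.sum_eq_single i0]
        · rw [if_neg (fun hcon => hne_ee_negee hk i0 i0 hcon.symm), if_pos rfl]
          norm_num
        · intro b _ hb
          rw [if_neg (fun hcon => hne_ee_negee hk b i0 hcon.symm),
            if_neg (fun hcon => hb (hee_inj hk i0 b (neg_inj.mp hcon)).symm)]
          norm_num
        · intro habs; exact absurd (Finset.mem_univ i0) habs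
      · have hd0 : h - g = -(fun _ => (1:ZMod 4)) := by
          rw [← neg_neg (h - g), h1]
        rw [hd0]
        rw [if_neg (fun hcon => hne_one_negone hk hcon.symm), if_pos rfl]
        rw [Finset.sum_eq_zero]
        · norm_num
        · intro b _
          rw [if_neg (fun hcon => hne_ee_negone hk b hcon.symm),
            if_neg (fun hcon => hne_ee_one hk b (neg_inj.mp hcon).symm)]
          norm_num
    · rw [(hA g h).2.2 hd hd2]
      rw [Set.mem_setOf_eq] at hd
      rw [Set.mem_setOf_eq, hgh] at hd2
      push_neg at hd hd2
      rw [if_neg hd.2, if_neg ?negone]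
      case negone =>
        intro hcon
        exact hd2.2 (by rw [hcon, neg_neg])
      rw [Finset.sum_eq_zero]
      · norm_num
      · intro b _
        rw [if_neg (fun hcon => hd.1 b hcon), if_neg ?negee]
        case negee =>
          intro hcon
          exact hd2.1 b (by rw [hcon, neg_neg])
        norm_num

end Aeq

lemma QS_univ_apply (g' h : Gk k) :
    QS (Finset.univ : Finset (Fin (2*k))) g' h = ∏ i, q ((h - g') i) := by
  unfold QS
  simp

lemma abs_final (K n0 n1 n2 n3 : ℕ) (hpar : Even (n0 + n1 + n2 + n3)) :
    |(1/2:ℝ) * ((1/2:ℝ)^K * (-1:ℝ)^n1 - (1/2:ℝ)^K * (-1:ℝ)^n2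
      + (1/2:ℝ)^K * (-1:ℝ)^n3 + (1/2:ℝ)^K * (-1:ℝ)^n0)| = 1/2^K := by
  have h2 := abs_comb n0 n1 n2 n3 hpar
  have hre : (1/2:ℝ) * ((1/2:ℝ)^K * (-1:ℝ)^n1 - (1/2:ℝ)^K * (-1:ℝ)^n2
      + (1/2:ℝ)^K * (-1:ℝ)^n3 + (1/2:ℝ)^K * (-1:ℝ)^n0)
      = ((1/2:ℝ) * (1/2:ℝ)^K) * ((-1:ℝ)^n1 - (-1:ℝ)^n2 + (-1:ℝ)^n3 + (-1:ℝ)^n0) := by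
    ring
  rw [hre, abs_mul, h2, abs_of_nonneg (by positivity)]
  rw [div_pow, one_pow]
  ring

end Stmt17Aux

/-- Let `k ≥ 1`, `G = (ℤ/4ℤ)^{2k}`, and let `C` consist of the `2k`
standard basis vectors together with the all-ones vector.  Then the oriented Cayley
graph `X(G, C)` (with skew adjacency matrix `A`) admits uniform mixing at time `π/4`:
every entry of `exp(−(π/4)·A)` has absolute value `1/2^{2k} = 1/√|G|`. -/
theorem stmt17 (k : ℕ) (hk : 1 ≤ k)
    (C : Set (Fin (2 * k) → ZMod 4))
    (hC : C = {x | (∃ i, x = Pi.single i 1) ∨ x = fun _ => 1})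
    (A : Matrix (Fin (2 * k) → ZMod 4) (Fin (2 * k) → ZMod 4) ℝ)
    (hA : ∀ g h, (h - g ∈ C → A g h = 1) ∧ (g - h ∈ C → A g h = -1) ∧
      (h - g ∉ C → g - h ∉ C → A g h = 0)) :
    ∀ g h, |(NormedSpace.exp ((-(Real.pi / 4)) • A)) g h| = 1 / 2 ^ (2 * k) := by
  have hAeq := Stmt17Aux.A_eq hk C hC A hA
  intro g h
  rw [hAeq, smul_add, Matrix.exp_add_of_commute _ _
    (((Commute.sum_right Finset.univ _ _ fun i _ =>
      Stmt17Aux.Mm_commute _ _).smul_left _).smul_right _),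
    Stmt17Aux.expM, Stmt17Aux.exp_sum_eq, Stmt17Aux.Ec_mul]
  rw [Stmt17Aux.QS_univ_apply, Stmt17Aux.QS_univ_apply, Stmt17Aux.QS_univ_apply,
    Stmt17Aux.QS_univ_apply]
  have hc0 : ∏ i, Stmt17Aux.q ((h - g) i) = ∏ i, Stmt17Aux.q ((h - g) i - 0) := by
    simp
  have hterm : ∀ (c' : Stmt17Aux.Gk k) (r : ZMod 4), (∀ i, c' i = r) →
      ∏ i, Stmt17Aux.q ((h - (g + c')) i) = ∏ i, Stmt17Aux.q ((h - g) i - r) := by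
    intro c' r hc'
    refine Finset.prod_congr rfl fun i _ => ?_
    rw [Stmt17Aux.sub_add_apply, hc' i]
  rw [hc0, hterm _ 1 (fun i => rfl),
    hterm _ 2 (fun i => by show (1:ZMod 4) + 1 = 2; decide),
    hterm _ 3 (fun i => by show (1:ZMod 4) + 1 + 1 = 3; decide)]
  rw [Stmt17Aux.prod_q_eq (h - g) 0, Stmt17Aux.prod_q_eq (h - g) 1,
    Stmt17Aux.prod_q_eq (h - g) 2, Stmt17Aux.prod_q_eq (h - g) 3]
  have e0 : (0:ZMod 4) + 1 = 1 := by decide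
  have e1 : (1:ZMod 4) + 1 = 2 := by decide
  have e2 : (2:ZMod 4) + 1 = 3 := by decide
  have e3 : (3:ZMod 4) + 1 = 0 := by decide
  simp only [e0, e1, e2, e3]
  have heven : Even ((Finset.univ.filter fun i => (h - g) i = 0).card
      + (Finset.univ.filter fun i => (h - g) i = 1).card
      + (Finset.univ.filter fun i => (h - g) i = 2).card
      + (Finset.univ.filter fun i => (h - g) i = 3).card) :=
    by rw [Stmt17Aux.fiber_count (h - g)]; exact even_two_mul k
  exact Stmt17Aux.abs_final (2*k) _ _ _ _ heven
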